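/- Suppose q > 4 and let f : F_q → F_q be given by f(x) = (ax + b)^{q−2} + c with a ∈ F_q^* and b, c ∈ F_q (i.e., f is a permutation of Carlitz rank at most 1 that is not affine). Then f has additive index q. -/

import Mathlib

open Polynomial

/-- A function `f : 𝔽_q → 𝔽_q` (with `q = p^n`) has codimension at most `k` if there are an
`𝔽_p`-linear map `L : 𝔽_q → 𝔽_q`, an `𝔽_p`-subspace `U` of dimension `n - k`, and a constant
`a_V` for each coset `V` of `U`, such that `f(x) = L(x) + a_{U+x}` for all `x`. -/
def HasCodimAtMost (p n : ℕ) {F : Type*} [Field F] [Fintype F] [Algebra (ZMod p) F]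
    (f : F → F) (k : ℕ) : Prop :=
  ∃ (L : F →ₗ[ZMod p] F) (U : Submodule (ZMod p) F) (a : F ⧸ U → F),
    Module.finrank (ZMod p) ↥U = n - k ∧
    ∀ x : F, f x = L x + a (Submodule.Quotient.mk x)

/-- The codimension `codim f` is the smallest `k` such that `f` has codimension at most `k`. -/
noncomputable def codim (p n : ℕ) {F : Type*} [Field F] [Fintype F] [Algebra (ZMod p) F]
    (f : F → F) : ℕ :=
  sInf {k | HasCodimAtMost p n f k}

/-- The additive index of `f` is `AddInd f = p ^ codim f`. -/
noncomputable def addInd (p n : ℕ) {F : Type*} [Field F] [Fintype F] [Algebra (ZMod p) F]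
    (f : F → F) : ℕ :=
  p ^ codim p n f

/-- Suppose `q > 4` and `f(x) = (ax + b)^(q-2) + c` with `a ≠ 0` (a
permutation of Carlitz rank at most 1 that is not affine). Then `f` has additive index `q`. -/
theorem stmt7 (p n : ℕ) [Fact p.Prime] (hn : 1 ≤ n) {F : Type*} [Field F]
    [Fintype F] [Algebra (ZMod p) F] (hcard : Fintype.card F = p ^ n)
    (hq : 4 < Fintype.card F) (a b c : F) (ha : a ≠ 0) :
    addInd p n (fun x : F => (a * x + b) ^ (Fintype.card F - 2) + c) = Fintype.card F := by
  classical
  set f : F → F := fun x : F => (a * x + b) ^ (Fintype.card F - 2) + c with hf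
  have hpow : ∀ x : F, x ^ (Fintype.card F - 2) = x⁻¹ := by
    intro x
    rcases eq_or_ne x 0 with rfl | hx
    · rw [inv_zero, zero_pow]; omega
    · have h1 : x ^ (Fintype.card F - 1) = 1 := FiniteField.pow_card_sub_one_eq_one x hx
      refine eq_inv_of_mul_eq_one_left ?_
      calc x ^ (Fintype.card F - 2) * x = x ^ (Fintype.card F - 1) := by
            rw [← pow_succ]; congr 1; omega
        _ = 1 := h1
  have hmem : HasCodimAtMost p n f n := by
    refine ⟨0, ⊥, fun v => f ((Submodule.quotEquivOfEqBot (⊥ : Submodule (ZMod p) F) rfl) v),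
      ?_, ?_⟩
    · simp
    · intro x
      simp [Submodule.quotEquivOfEqBot_apply_mk]
  have hlb : ∀ k, HasCodimAtMost p n f k → n ≤ k := by
    rintro k ⟨L, U, A, hdim, hfa⟩
    by_contra hlt
    push_neg at hlt
    have hUne : U ≠ ⊥ := by
      intro h
      rw [h] at hdim
      simp at hdim
      omega
    obtain ⟨u, hu, hu0⟩ := U.ne_bot_iff.mp hUne
    have hLu : ∀ x : F, f (x + u) - f x = L u := by
      intro x
      have h1 := hfa x
      have h2 := hfa (x + u)
      have hmk : (Submodule.Quotient.mk (x + u) : F ⧸ U) = Submodule.Quotient.mk x := by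
        rw [Submodule.Quotient.eq]; simpa using hu
      rw [hmk] at h2
      rw [h1, h2, map_add]; ring
    set v : F := a * u with hv
    have hv0 : v ≠ 0 := mul_ne_zero ha hu0
    have hconst : ∀ t : F, (t + v)⁻¹ - t⁻¹ = L u := by
      intro t
      have h := hLu ((t - b) / a)
      have e1 : a * ((t - b) / a + u) + b = t + v := by field_simp; ring
      have e2 : a * ((t - b) / a) + b = t := by field_simp; ring
      rw [hf] at h
      simp only [e1, e2, hpow] at h
      linear_combination h
    have h0 := hconst 0
    rw [zero_add, inv_zero, sub_zero] at h0
    set P : F[X] := X * (X + C v) * (X ^ 2 + C v * X + C (v ^ 2)) with hP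
    have hPdeg : P.natDegree = 4 := by
      rw [hP]; compute_degree!
    have hP0 : P ≠ 0 := fun h => by simp [h] at hPdeg
    obtain ⟨t, ht⟩ := P.exists_eval_ne_zero_of_natDegree_lt_card hP0 (by
      rw [Cardinal.mk_fintype, hPdeg]
      exact_mod_cast hq)
    rw [hP] at ht
    simp only [eval_mul, eval_add, eval_pow, eval_X, eval_C, ne_eq, mul_eq_zero, not_or] at ht
    obtain ⟨⟨ht0, htv⟩, htq⟩ := ht
    have h1 := hconst t
    rw [← h0] at h1
    apply htq
    field_simp at h1
    linear_combination -h1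
  have hc : codim p n f = n :=
    le_antisymm (Nat.sInf_le hmem) (le_csInf ⟨n, hmem⟩ hlb)
  rw [addInd, hc, hcard]
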